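/- Let λ₃ < λ₁ < 0 < λ₂ < λ₄ be reals, ρ ∈ (0,1), q > 0, and let b, F : I → ℝ be differentiable on an interval I. Define A₁(m) = e^{−λ₁b(m)}(ρλ₂e^{−qm} − F(m))/(λ₁(λ₂ − λ₁)), A₂(m) = e^{−λ₂b(m)}(ρλ₁e^{−qm} − F(m))/(λ₂(λ₁ − λ₂)), A₃(m) = e^{−λ₃b(m)}((1−ρ)λ₄e^{−qm} + F(m))/(λ₃(λ₄ − λ₃)), A₄(m) = e^{−λ₄b(m)}((1−ρ)λ₃e^{−qm} + F(m))/(λ₄(λ₃ − λ₄)). Then for every m ∈ I: (a) λ₁A₁(m)e^{λ₁b(m)} + λ₂A₂(m)e^{λ₂b(m)} = ρe^{−qm}, λ₃A₃(m)e^{λ₃b(m)} + λ₄A₄(m)e^{λ₄b(m)} = (1−ρ)e^{−qm}, λ₁²A₁(m)e^{λ₁b(m)} + λ₂²A₂(m)e^{λ₂b(m)} = F(m), λ₃²A₃(m)e^{λ₃b(m)} + λ₄²A₄(m)e^{λ₄b(m)} = −F(m), so that Σᵢ₌₁⁴ λᵢ²Aᵢ(m)e^{λᵢb(m)} = 0;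 and (b) λ₁λ₂(λ₂−λ₁)·[A₁'(m)e^{λ₁m} + A₂'(m)e^{λ₂m}] = X₁₁(m,b(m),F(m))·b'(m) + X₁₂(m,b(m))·F'(m) − R₁(m,b(m)), and λ₃λ₄(λ₄−λ₃)·[A₃'(m)e^{λ₃m} + A₄'(m)e^{λ₄m}] = X₂₁(m,b(m),F(m))·b'(m) + X₂₂(m,b(m))·F'(m) − R₂(m,b(m)); hence the Neumann conditions A₁'(m)e^{λ₁m} + A₂'(m)e^{λ₂m} = 0 and A₃'(m)e^{λ₃m} + A₄'(m)e^{λ₄m} = 0 hold if and only if (b, F) solves the ODE system X₁₁b' + X₁₂F' = R₁, X₂₁b' + X₂₂F' = R₂. -/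

import Mathlib

/-- `X₁₁(m,b,F)`. -/
noncomputable def X11 (l1 l2 ρ q m b F : ℝ) : ℝ :=
  l1 * l2 * (ρ * Real.exp (-q * m) *
      (l1 * Real.exp (l2 * (m - b)) - l2 * Real.exp (l1 * (m - b))) +
    (Real.exp (l1 * (m - b)) - Real.exp (l2 * (m - b))) * F)

/-- `X₁₂(m,b)`. -/
noncomputable def X12 (l1 l2 m b : ℝ) : ℝ :=
  l1 * Real.exp (l2 * (m - b)) - l2 * Real.exp (l1 * (m - b))

/-- `X₂₁(m,b,F)`. -/
noncomputable def X21 (l3 l4 ρ q m b F : ℝ) : ℝ :=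
  l3 * l4 * ((1 - ρ) * Real.exp (-q * m) *
      (l3 * Real.exp (l4 * (m - b)) - l4 * Real.exp (l3 * (m - b))) -
    (Real.exp (l3 * (m - b)) - Real.exp (l4 * (m - b))) * F)

/-- `X₂₂(m,b)`. -/
noncomputable def X22 (l3 l4 m b : ℝ) : ℝ :=
  l4 * Real.exp (l3 * (m - b)) - l3 * Real.exp (l4 * (m - b))

/-- `R₁(m,b)`. -/
noncomputable def R1 (l1 l2 ρ q m b : ℝ) : ℝ :=
  ρ * q * Real.exp (-q * m) *
    (l2 ^ 2 * Real.exp (l1 * (m - b)) - l1 ^ 2 * Real.exp (l2 * (m - b)))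

/-- `R₂(m,b)`. -/
noncomputable def R2 (l3 l4 ρ q m b : ℝ) : ℝ :=
  (1 - ρ) * q * Real.exp (-q * m) *
    (l4 ^ 2 * Real.exp (l3 * (m - b)) - l3 ^ 2 * Real.exp (l4 * (m - b)))

/-- `A₁(m) = e^{−λ₁b(m)}(ρλ₂e^{−qm} − F(m))/(λ₁(λ₂−λ₁))`. -/
noncomputable def A1fun (l1 l2 ρ q : ℝ) (b F : ℝ → ℝ) (m : ℝ) : ℝ :=
  Real.exp (-l1 * b m) * (ρ * l2 * Real.exp (-q * m) - F m) / (l1 * (l2 - l1))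

/-- `A₂(m) = e^{−λ₂b(m)}(ρλ₁e^{−qm} − F(m))/(λ₂(λ₁−λ₂))`. -/
noncomputable def A2fun (l1 l2 ρ q : ℝ) (b F : ℝ → ℝ) (m : ℝ) : ℝ :=
  Real.exp (-l2 * b m) * (ρ * l1 * Real.exp (-q * m) - F m) / (l2 * (l1 - l2))

/-- `A₃(m) = e^{−λ₃b(m)}((1−ρ)λ₄e^{−qm} + F(m))/(λ₃(λ₄−λ₃))`. -/
noncomputable def A3fun (l3 l4 ρ q : ℝ) (b F : ℝ → ℝ) (m : ℝ) : ℝ :=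
  Real.exp (-l3 * b m) * ((1 - ρ) * l4 * Real.exp (-q * m) + F m) /
    (l3 * (l4 - l3))

/-- `A₄(m) = e^{−λ₄b(m)}((1−ρ)λ₃e^{−qm} + F(m))/(λ₄(λ₃−λ₄))`. -/
noncomputable def A4fun (l3 l4 ρ q : ℝ) (b F : ℝ → ℝ) (m : ℝ) : ℝ :=
  Real.exp (-l4 * b m) * ((1 - ρ) * l3 * Real.exp (-q * m) + F m) /
    (l4 * (l3 - l4))


private lemma genDeriv (c α β d q : ℝ) (b F : ℝ → ℝ) (m : ℝ)
    (hb : DifferentiableAt ℝ b m) (hF : DifferentiableAt ℝ F m) :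
    HasDerivAt (fun x => Real.exp (c * b x) * (α * Real.exp (-q * x) + β * F x) / d)
      ((Real.exp (c * b m) * (c * deriv b m) * (α * Real.exp (-q * m) + β * F m)
        + Real.exp (c * b m) * (α * (-q) * Real.exp (-q * m) + β * deriv F m)) / d) m := by
  have h1 : HasDerivAt (fun x => c * b x) (c * deriv b m) m :=
    (hb.hasDerivAt).const_mul c
  have h2 := h1.exp
  have h3 : HasDerivAt (fun x : ℝ => -q * x) (-q) m := by
    simpa using (hasDerivAt_id m).const_mul (-q)
  have h4 := h3.exp
  have h5 : HasDerivAt (fun x => α * Real.exp (-q * x)) (α * (Real.exp (-q * m) * (-q))) m :=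
    h4.const_mul α
  have h6 : HasDerivAt (fun x => β * F x) (β * deriv F m) m := hF.hasDerivAt.const_mul β
  have h7 := (h2.mul (h5.add h6)).div_const d
  refine h7.congr_deriv ?_
  simp only [Pi.add_apply]
  ring

private lemma derivA1 (l1 l2 ρ q : ℝ) (b F : ℝ → ℝ) (m : ℝ)
    (hb : DifferentiableAt ℝ b m) (hF : DifferentiableAt ℝ F m) :
    deriv (A1fun l1 l2 ρ q b F) m =
      (Real.exp (-l1 * b m) * (-l1 * deriv b m) * (ρ * l2 * Real.exp (-q * m) - F m)
        + Real.exp (-l1 * b m) * (ρ * l2 * (-q) * Real.exp (-q * m) - deriv F m))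
        / (l1 * (l2 - l1)) := by
  have h := genDeriv (-l1) (ρ * l2) (-1) (l1 * (l2 - l1)) q b F m hb hF
  have he : A1fun l1 l2 ρ q b F = fun x =>
      Real.exp (-l1 * b x) * (ρ * l2 * Real.exp (-q * x) + (-1) * F x) / (l1 * (l2 - l1)) := by
    funext x; simp only [A1fun]; ring
  rw [he, h.deriv]; ring

private lemma derivA2 (l1 l2 ρ q : ℝ) (b F : ℝ → ℝ) (m : ℝ)
    (hb : DifferentiableAt ℝ b m) (hF : DifferentiableAt ℝ F m) :
    deriv (A2fun l1 l2 ρ q b F) m =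
      (Real.exp (-l2 * b m) * (-l2 * deriv b m) * (ρ * l1 * Real.exp (-q * m) - F m)
        + Real.exp (-l2 * b m) * (ρ * l1 * (-q) * Real.exp (-q * m) - deriv F m))
        / (l2 * (l1 - l2)) := by
  have h := genDeriv (-l2) (ρ * l1) (-1) (l2 * (l1 - l2)) q b F m hb hF
  have he : A2fun l1 l2 ρ q b F = fun x =>
      Real.exp (-l2 * b x) * (ρ * l1 * Real.exp (-q * x) + (-1) * F x) / (l2 * (l1 - l2)) := by
    funext x; simp only [A2fun]; ring
  rw [he, h.deriv]; ring

private lemma derivA3 (l3 l4 ρ q : ℝ) (b F : ℝ → ℝ) (m : ℝ)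
    (hb : DifferentiableAt ℝ b m) (hF : DifferentiableAt ℝ F m) :
    deriv (A3fun l3 l4 ρ q b F) m =
      (Real.exp (-l3 * b m) * (-l3 * deriv b m) * ((1 - ρ) * l4 * Real.exp (-q * m) + F m)
        + Real.exp (-l3 * b m) * ((1 - ρ) * l4 * (-q) * Real.exp (-q * m) + deriv F m))
        / (l3 * (l4 - l3)) := by
  have h := genDeriv (-l3) ((1 - ρ) * l4) 1 (l3 * (l4 - l3)) q b F m hb hF
  have he : A3fun l3 l4 ρ q b F = fun x =>
      Real.exp (-l3 * b x) * ((1 - ρ) * l4 * Real.exp (-q * x) + 1 * F x) / (l3 * (l4 - l3)) := by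
    funext x; simp only [A3fun]; ring
  rw [he, h.deriv]; ring

private lemma derivA4 (l3 l4 ρ q : ℝ) (b F : ℝ → ℝ) (m : ℝ)
    (hb : DifferentiableAt ℝ b m) (hF : DifferentiableAt ℝ F m) :
    deriv (A4fun l3 l4 ρ q b F) m =
      (Real.exp (-l4 * b m) * (-l4 * deriv b m) * ((1 - ρ) * l3 * Real.exp (-q * m) + F m)
        + Real.exp (-l4 * b m) * ((1 - ρ) * l3 * (-q) * Real.exp (-q * m) + deriv F m))
        / (l4 * (l3 - l4)) := by
  have h := genDeriv (-l4) ((1 - ρ) * l3) 1 (l4 * (l3 - l4)) q b F m hb hF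
  have he : A4fun l3 l4 ρ q b F = fun x =>
      Real.exp (-l4 * b x) * ((1 - ρ) * l3 * Real.exp (-q * x) + 1 * F x) / (l4 * (l3 - l4)) := by
    funext x; simp only [A4fun]; ring
  rw [he, h.deriv]; ring

set_option maxHeartbeats 1000000 in
/-- Reduction of the differential-algebraic system for the dividend boundary to
the ODE system `X₁₁b' + X₁₂F' = R₁`, `X₂₁b' + X₂₂F' = R₂`. -/
theorem stmt9 (l1 l2 l3 l4 ρ q : ℝ)
    (h31 : l3 < l1) (h10 : l1 < 0) (h02 : (0:ℝ) < l2) (h24 : l2 < l4)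
    (hρ : ρ ∈ Set.Ioo (0:ℝ) 1) (hq : 0 < q)
    (I : Set ℝ) (b F : ℝ → ℝ)
    (hb : ∀ m ∈ I, DifferentiableAt ℝ b m)
    (hF : ∀ m ∈ I, DifferentiableAt ℝ F m) :
    (∀ m ∈ I,
      l1 * A1fun l1 l2 ρ q b F m * Real.exp (l1 * b m) +
          l2 * A2fun l1 l2 ρ q b F m * Real.exp (l2 * b m) =
        ρ * Real.exp (-q * m) ∧
      l3 * A3fun l3 l4 ρ q b F m * Real.exp (l3 * b m) +
          l4 * A4fun l3 l4 ρ q b F m * Real.exp (l4 * b m) =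
        (1 - ρ) * Real.exp (-q * m) ∧
      l1 ^ 2 * A1fun l1 l2 ρ q b F m * Real.exp (l1 * b m) +
          l2 ^ 2 * A2fun l1 l2 ρ q b F m * Real.exp (l2 * b m) = F m ∧
      l3 ^ 2 * A3fun l3 l4 ρ q b F m * Real.exp (l3 * b m) +
          l4 ^ 2 * A4fun l3 l4 ρ q b F m * Real.exp (l4 * b m) = -F m ∧
      l1 ^ 2 * A1fun l1 l2 ρ q b F m * Real.exp (l1 * b m) +
          l2 ^ 2 * A2fun l1 l2 ρ q b F m * Real.exp (l2 * b m) +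
          l3 ^ 2 * A3fun l3 l4 ρ q b F m * Real.exp (l3 * b m) +
          l4 ^ 2 * A4fun l3 l4 ρ q b F m * Real.exp (l4 * b m) = 0) ∧
    (∀ m ∈ I,
      l1 * l2 * (l2 - l1) *
          (deriv (A1fun l1 l2 ρ q b F) m * Real.exp (l1 * m) +
            deriv (A2fun l1 l2 ρ q b F) m * Real.exp (l2 * m)) =
        X11 l1 l2 ρ q m (b m) (F m) * deriv b m +
          X12 l1 l2 m (b m) * deriv F m - R1 l1 l2 ρ q m (b m) ∧
      l3 * l4 * (l4 - l3) *
          (deriv (A3fun l3 l4 ρ q b F) m * Real.exp (l3 * m) +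
            deriv (A4fun l3 l4 ρ q b F) m * Real.exp (l4 * m)) =
        X21 l3 l4 ρ q m (b m) (F m) * deriv b m +
          X22 l3 l4 m (b m) * deriv F m - R2 l3 l4 ρ q m (b m)) ∧
    (∀ m ∈ I,
      ((deriv (A1fun l1 l2 ρ q b F) m * Real.exp (l1 * m) +
          deriv (A2fun l1 l2 ρ q b F) m * Real.exp (l2 * m) = 0 ∧
        deriv (A3fun l3 l4 ρ q b F) m * Real.exp (l3 * m) +
          deriv (A4fun l3 l4 ρ q b F) m * Real.exp (l4 * m) = 0) ↔
      (X11 l1 l2 ρ q m (b m) (F m) * deriv b m +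
          X12 l1 l2 m (b m) * deriv F m = R1 l1 l2 ρ q m (b m) ∧
        X21 l3 l4 ρ q m (b m) (F m) * deriv b m +
          X22 l3 l4 m (b m) * deriv F m = R2 l3 l4 ρ q m (b m)))) := by

  have hl1 : l1 ≠ 0 := ne_of_lt h10
  have hl2 : l2 ≠ 0 := ne_of_gt h02
  have hl3 : l3 ≠ 0 := ne_of_lt (h31.trans h10)
  have hl4 : l4 ≠ 0 := ne_of_gt (h02.trans h24)
  have h21 : l2 - l1 ≠ 0 := (by linarith : (0:ℝ) < l2 - l1).ne'
  have h12 : l1 - l2 ≠ 0 := (by linarith : l1 - l2 < 0).ne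
  have h43 : l4 - l3 ≠ 0 := (by linarith : (0:ℝ) < l4 - l3).ne'
  have h34 : l3 - l4 ≠ 0 := (by linarith : l3 - l4 < 0).ne
  have keyB : ∀ m ∈ I,
      l1 * l2 * (l2 - l1) *
          (deriv (A1fun l1 l2 ρ q b F) m * Real.exp (l1 * m) +
            deriv (A2fun l1 l2 ρ q b F) m * Real.exp (l2 * m)) =
        X11 l1 l2 ρ q m (b m) (F m) * deriv b m +
          X12 l1 l2 m (b m) * deriv F m - R1 l1 l2 ρ q m (b m) ∧
      l3 * l4 * (l4 - l3) *
          (deriv (A3fun l3 l4 ρ q b F) m * Real.exp (l3 * m) +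
            deriv (A4fun l3 l4 ρ q b F) m * Real.exp (l4 * m)) =
        X21 l3 l4 ρ q m (b m) (F m) * deriv b m +
          X22 l3 l4 m (b m) * deriv F m - R2 l3 l4 ρ q m (b m) := by
    intro m hm
    rw [derivA1 l1 l2 ρ q b F m (hb m hm) (hF m hm),
        derivA2 l1 l2 ρ q b F m (hb m hm) (hF m hm),
        derivA3 l3 l4 ρ q b F m (hb m hm) (hF m hm),
        derivA4 l3 l4 ρ q b F m (hb m hm) (hF m hm)]
    have e1 : Real.exp (l1 * b m) ≠ 0 := Real.exp_ne_zero _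
    have e2 : Real.exp (l2 * b m) ≠ 0 := Real.exp_ne_zero _
    have e3 : Real.exp (l3 * b m) ≠ 0 := Real.exp_ne_zero _
    have e4 : Real.exp (l4 * b m) ≠ 0 := Real.exp_ne_zero _
    have q1 : Real.exp (l1 * (m - b m)) = Real.exp (l1 * m) * (Real.exp (l1 * b m))⁻¹ := by
      rw [mul_sub, Real.exp_sub, div_eq_mul_inv]
    have q2 : Real.exp (l2 * (m - b m)) = Real.exp (l2 * m) * (Real.exp (l2 * b m))⁻¹ := by
      rw [mul_sub, Real.exp_sub, div_eq_mul_inv]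
    have q3 : Real.exp (l3 * (m - b m)) = Real.exp (l3 * m) * (Real.exp (l3 * b m))⁻¹ := by
      rw [mul_sub, Real.exp_sub, div_eq_mul_inv]
    have q4 : Real.exp (l4 * (m - b m)) = Real.exp (l4 * m) * (Real.exp (l4 * b m))⁻¹ := by
      rw [mul_sub, Real.exp_sub, div_eq_mul_inv]
    have n1 : Real.exp (-l1 * b m) = (Real.exp (l1 * b m))⁻¹ := by
      rw [neg_mul, Real.exp_neg]
    have n2 : Real.exp (-l2 * b m) = (Real.exp (l2 * b m))⁻¹ := by
      rw [neg_mul, Real.exp_neg]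
    have n3 : Real.exp (-l3 * b m) = (Real.exp (l3 * b m))⁻¹ := by
      rw [neg_mul, Real.exp_neg]
    have n4 : Real.exp (-l4 * b m) = (Real.exp (l4 * b m))⁻¹ := by
      rw [neg_mul, Real.exp_neg]
    constructor
    · simp only [X11, X12, R1, q1, q2, n1, n2]
      field_simp
      ring
    · simp only [X21, X22, R2, q3, q4, n3, n4]
      field_simp
      ring
  refine ⟨?_, keyB, ?_⟩
  · intro m hm
    have e1 : Real.exp (l1 * b m) ≠ 0 := Real.exp_ne_zero _
    have e2 : Real.exp (l2 * b m) ≠ 0 := Real.exp_ne_zero _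
    have e3 : Real.exp (l3 * b m) ≠ 0 := Real.exp_ne_zero _
    have e4 : Real.exp (l4 * b m) ≠ 0 := Real.exp_ne_zero _
    have n1 : Real.exp (-l1 * b m) = (Real.exp (l1 * b m))⁻¹ := by
      rw [neg_mul, Real.exp_neg]
    have n2 : Real.exp (-l2 * b m) = (Real.exp (l2 * b m))⁻¹ := by
      rw [neg_mul, Real.exp_neg]
    have n3 : Real.exp (-l3 * b m) = (Real.exp (l3 * b m))⁻¹ := by
      rw [neg_mul, Real.exp_neg]
    have n4 : Real.exp (-l4 * b m) = (Real.exp (l4 * b m))⁻¹ := by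
      rw [neg_mul, Real.exp_neg]
    have g1 : l1 * A1fun l1 l2 ρ q b F m * Real.exp (l1 * b m) +
        l2 * A2fun l1 l2 ρ q b F m * Real.exp (l2 * b m) = ρ * Real.exp (-q * m) := by
      simp only [A1fun, A2fun, n1, n2]
      field_simp
      ring
    have g2 : l3 * A3fun l3 l4 ρ q b F m * Real.exp (l3 * b m) +
        l4 * A4fun l3 l4 ρ q b F m * Real.exp (l4 * b m) = (1 - ρ) * Real.exp (-q * m) := by
      simp only [A3fun, A4fun, n3, n4]
      field_simp
      ring
    have g3 : l1 ^ 2 * A1fun l1 l2 ρ q b F m * Real.exp (l1 * b m) +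
        l2 ^ 2 * A2fun l1 l2 ρ q b F m * Real.exp (l2 * b m) = F m := by
      simp only [A1fun, A2fun, n1, n2]
      field_simp
      ring
    have g4 : l3 ^ 2 * A3fun l3 l4 ρ q b F m * Real.exp (l3 * b m) +
        l4 ^ 2 * A4fun l3 l4 ρ q b F m * Real.exp (l4 * b m) = -F m := by
      simp only [A3fun, A4fun, n3, n4]
      field_simp
      ring
    exact ⟨g1, g2, g3, g4, by linarith⟩
  · intro m hm
    obtain ⟨e1, e2⟩ := keyB m hm
    have hc1 : l1 * l2 * (l2 - l1) ≠ 0 := mul_ne_zero (mul_ne_zero hl1 hl2) h21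
    have hc2 : l3 * l4 * (l4 - l3) ≠ 0 := mul_ne_zero (mul_ne_zero hl3 hl4) h43
    constructor
    · rintro ⟨s1, s2⟩
      rw [s1, mul_zero] at e1
      rw [s2, mul_zero] at e2
      constructor <;> linarith
    · rintro ⟨t1, t2⟩
      rw [t1] at e1
      rw [t2] at e2
      simp only [sub_self] at e1 e2
      exact ⟨by
        rcases mul_eq_zero.mp e1 with h | h
        · exact absurd h hc1
        · exact h, by
        rcases mul_eq_zero.mp e2 with h | h
        · exact absurd h hc2
        · exact h⟩
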